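/- Let B be a conjunction of literals with domain all of C (|B| = |C|) and target values b : C → {0,1}, with C partitioned as B₊ ⊔ B′, and suppose every literal of B at a coordinate in B₊ has a positive monotonic effect on D relative to C. If for some tree 𝔗 on B₊ and some ω* ∈ Ω one has D_{B=1}(ω*) − Σ_{i ∈ B₊} D_{B∖{i}=1, i flipped}(ω*) − Σ_{∅ ≠ B̃ ⊆ B′} D_{B∖B̃=1, B̃ flipped}(ω*) + Σ_{E ∈ 𝔗} D_{B∖E=1, E flipped}(ω*) > 0, where D_{B=1} denotes D at the target assignment b, and 'flipped' coordinates are set to 1 − b(·) with all other coordinates at their target values, then B is singular for D(C,Ω). -/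

import Mathlib

/-- An assignment of values to the binary causes indexed by `ι`. -/
abbrev Assign (ι : Type*) := ι → Bool

/-- A conjunction of literals over `ι`: a partial assignment, where `B i = some v`
means the literal at coordinate `i` has target value `v`, and `B i = none` means
`i` is not in the domain of the conjunction. -/
abbrev Conj (ι : Type*) := ι → Option Bool

/-- An assignment `c` satisfies a conjunction of literals `B`. -/
def Satisfies {ι : Type*} (c : Assign ι) (B : Conj ι) : Prop :=
  ∀ i v, B i = some v → c i = v

/-- `B'` extends `B` : the domain of `B'` contains that of `B` and they agree there. -/
def ConjExtends {ι : Type*} (B B' : Conj ι) : Prop :=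
  ∀ i v, B i = some v → B' i = some v

/-- `(A, 𝔅)` is a sufficient cause representation for the family of potential
outcomes `D`. -/
def IsRepresentation {ι Ω : Type*} (D : Ω → Assign ι → Bool)
    {p : ℕ} (A : Fin p → Ω → Bool) (𝔅 : Fin p → Conj ι) : Prop :=
  ∀ (ω : Ω) (c : Assign ι),
    D ω c = true ↔ ∃ j, A j ω = true ∧ Satisfies c (𝔅 j)

/-- `B` is irreducible for `D(C, Ω)`: every sufficient cause representation
contains some conjunction extending `B`. -/
def IrreducibleConj {ι Ω : Type*} (D : Ω → Assign ι → Bool) (B : Conj ι) : Prop :=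
  ∀ (p : ℕ) (A : Fin p → Ω → Bool) (𝔅 : Fin p → Conj ι),
    IsRepresentation D A 𝔅 → ∃ j, ConjExtends B (𝔅 j)

/-- `B` is a sufficient cause for `D` for the individual `ω`. -/
def SuffCauseFor {ι Ω : Type*} (D : Ω → Assign ι → Bool) (B : Conj ι) (ω : Ω) : Prop :=
  ∀ c : Assign ι, Satisfies c B → D ω c = true

/-- `B` is a minimal sufficient cause for `D` for `ω`: it is a sufficient cause,
but no restriction of `B` to a proper subset of its domain is. -/
def MinSuffCauseFor {ι Ω : Type*} (D : Ω → Assign ι → Bool) (B : Conj ι) (ω : Ω) : Prop :=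
  SuffCauseFor D B ω ∧
    ∀ B' : Conj ι, ConjExtends B' B → B' ≠ B → ¬ SuffCauseFor D B' ω

/-- `B` is a singular (minimal sufficient) cause for `ω`: it is the unique minimal
sufficient cause for `ω`. -/
def SingularFor {ι Ω : Type*} (D : Ω → Assign ι → Bool) (B : Conj ι) (ω : Ω) : Prop :=
  MinSuffCauseFor D B ω ∧ ∀ B' : Conj ι, B' ≠ B → ¬ MinSuffCauseFor D B' ω

/-- `B` is singular for `D(C, Ω)`: it is singular for some individual. -/
def Singular {ι Ω : Type*} (D : Ω → Assign ι → Bool) (B : Conj ι) : Prop :=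
  ∃ ω : Ω, SingularFor D B ω

/-- The literal at coordinate `i` with target value `v` has a positive monotonic
effect on `D` relative to `C`. -/
def PosMonotone {ι Ω : Type*} [DecidableEq ι] (D : Ω → Assign ι → Bool)
    (i : ι) (v : Bool) : Prop :=
  ∀ (ω : Ω) (c : Assign ι),
    D ω (Function.update c i (!v)) = true → D ω (Function.update c i v) = true

/-- `T` is a tree on the finite vertex set `V`: a set of unordered pairs of
distinct elements of `V` with `|T| = |V| - 1` such that any two vertices of `V`
are connected by a path of edges of `T`. -/
def IsTreeOn {ι : Type*} (V : Finset ι) (T : Finset (Sym2 ι)) : Prop :=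
  (∀ e ∈ T, ¬ e.IsDiag ∧ ∀ i ∈ e, i ∈ V) ∧
  T.card = V.card - 1 ∧
  (∀ x ∈ V, ∀ y ∈ V, Relation.ReflTransGen (fun a b => s(a, b) ∈ T) x y)

private lemma exists_edge_aux {α : Type*} {T : Finset (Sym2 α)} {x y : α}
    (h : Relation.ReflTransGen (fun a b => s(a, b) ∈ T) x y) (hxy : x ≠ y) :
    ∃ a b, a ≠ b ∧ s(a, b) ∈ T := by
  induction h with
  | refl => exact absurd rfl hxy
  | tail hxm hmy ih =>
    rename_i m y'
    by_cases hm : m = y'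
    · exact ih (hm ▸ hxy)
    · exact ⟨m, y', hm, hmy⟩

private lemma rtg_map_aux {α : Type*} (f : α → α) {T T' : Finset (Sym2 α)}
    (h : ∀ u v, s(u, v) ∈ T → f u = f v ∨ s(f u, f v) ∈ T') {x y : α}
    (hxy : Relation.ReflTransGen (fun a b => s(a, b) ∈ T) x y) :
    Relation.ReflTransGen (fun a b => s(a, b) ∈ T') (f x) (f y) := by
  induction hxy with
  | refl => exact Relation.ReflTransGen.refl
  | tail hprev hstep ih =>
    rename_i m y'
    rcases h m y' hstep with heq | hmem
    · exact heq ▸ ih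
    · exact ih.tail hmem

private lemma conn_card_le_aux {α : Type*} [DecidableEq α] (n : ℕ) :
    ∀ (V : Finset α) (T : Finset (Sym2 α)), V.card ≤ n →
    (∀ e ∈ T, ∀ i ∈ e, i ∈ V) →
    (∀ x ∈ V, ∀ y ∈ V, Relation.ReflTransGen (fun a b => s(a, b) ∈ T) x y) →
    V.card ≤ T.card + 1 := by
  induction n with
  | zero => intro V T hc _ _; omega
  | succ n ih =>
    intro V T hc hend hconn
    by_cases h1 : V.card ≤ 1
    · omega
    have h2 : 1 < V.card := by omega
    obtain ⟨x, hx, y, hy, hxy⟩ := Finset.one_lt_card.mp h2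
    obtain ⟨a, c, hac, he⟩ := exists_edge_aux (hconn x hx y hy) hxy
    have ha : a ∈ V := hend _ he a (by simp)
    have hcV : c ∈ V := hend _ he c (by simp)
    set f : α → α := fun z => if z = c then a else z with hf
    have hfa : f a = a := by simp [hf, hac]
    have hfc : f c = a := by simp [hf]
    set V' := V.erase c with hV'
    set T' := (T.image (Sym2.map f)).erase s(a, a) with hT'
    have hVc : V'.card = V.card - 1 := Finset.card_erase_of_mem hcV
    have haaim : s(a, a) ∈ T.image (Sym2.map f) := by
      refine Finset.mem_image.mpr ⟨s(a, c), he, ?_⟩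
      rw [Sym2.map_pair_eq, hfa, hfc]
    have hTc : T'.card ≤ T.card - 1 := by
      rw [hT', Finset.card_erase_of_mem haaim]
      have := Finset.card_image_le (s := T) (f := Sym2.map f)
      omega
    have hTpos : 1 ≤ T.card := Finset.card_pos.mpr ⟨_, he⟩
    have hend' : ∀ e ∈ T', ∀ i ∈ e, i ∈ V' := by
      intro e heT' i hie
      have heim : e ∈ T.image (Sym2.map f) := Finset.mem_of_mem_erase heT'
      obtain ⟨e₀, he₀, rfl⟩ := Finset.mem_image.mp heim
      obtain ⟨j, hj, rfl⟩ := Sym2.mem_map.mp hie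
      have hjV : j ∈ V := hend _ he₀ j hj
      by_cases hjc : j = c
      · subst hjc; rw [hfc]; exact Finset.mem_erase.mpr ⟨Ne.symm (fun h => hac h.symm), ha⟩
      · simp only [hf]; rw [if_neg hjc]; exact Finset.mem_erase.mpr ⟨hjc, hjV⟩
    have hconn' : ∀ x ∈ V', ∀ y ∈ V', Relation.ReflTransGen (fun a b => s(a, b) ∈ T') x y := by
      intro u hu v hv
      obtain ⟨huc, huV⟩ := Finset.mem_erase.mp hu
      obtain ⟨hvc, hvV⟩ := Finset.mem_erase.mp hv
      have hmap : ∀ p q, s(p, q) ∈ T → f p = f q ∨ s(f p, f q) ∈ T' := by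
        intro p q hpq
        by_cases hd : s(f p, f q) = s(a, a)
        · left
          rw [Sym2.eq_iff] at hd
          rcases hd with ⟨h1, h2⟩ | ⟨h1, h2⟩ <;> rw [h1, h2]
        · right
          refine Finset.mem_erase.mpr ⟨hd, Finset.mem_image.mpr ⟨s(p, q), hpq, ?_⟩⟩
          rw [Sym2.map_pair_eq]
      have := rtg_map_aux f hmap (hconn u huV v hvV)
      simpa [hf, if_neg huc, if_neg hvc] using this
    have := ih V' T' (by omega) hend' hconn'
    omega
private lemma bool_ne_iff' {x y : Bool} (h : ¬ x = y) : x = !y := by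
  cases x <;> cases y <;> simp_all

private lemma sum_toNat_eq_card {κ : Type*} (s : Finset κ) (g : κ → Bool) :
    ∑ i ∈ s, ((g i).toNat : ℤ) = ((s.filter (fun i => g i = true)).card : ℤ) := by
  rw [Finset.card_filter]
  push_cast
  refine Finset.sum_congr rfl (fun i _ => ?_)
  cases h : g i <;> simp [h]

private lemma unflip {ι Ω : Type*} [DecidableEq ι] {D : Ω → Assign ι → Bool}
    {Bp : Finset ι} {b : ι → Bool} (hmono : ∀ i ∈ Bp, PosMonotone D i (b i))
    (ω : Ω) : ∀ (F : Finset ι), F ⊆ Bp → ∀ (c : Assign ι), D ω c = true →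
    D ω (fun j => if j ∈ F then b j else c j) = true := by
  intro F
  induction F using Finset.induction_on with
  | empty => intro _ c hc; simpa using hc
  | @insert a F' ha ih =>
    intro hins c hc
    have hF' : F' ⊆ Bp := (Finset.subset_insert a F').trans hins
    have hg₀ := ih hF' c hc
    set g₀ : Assign ι := fun j => if j ∈ F' then b j else c j with hg₀def
    have key : D ω (Function.update g₀ a (b a)) = true := by
      by_cases hca : c a = b a
      · have heq : Function.update g₀ a (b a) = g₀ := by
          funext j
          by_cases hj : j = a
          · subst hj; simp [hg₀def, ha, hca]
          · rw [Function.update_of_ne hj]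
        rw [heq]; exact hg₀
      · have hca' : c a = !(b a) := bool_ne_iff' hca
        have heq : g₀ = Function.update g₀ a (!(b a)) := by
          funext j
          by_cases hj : j = a
          · subst hj; simp [hg₀def, ha, hca']
          · rw [Function.update_of_ne hj]
        exact hmono a (hins (Finset.mem_insert_self a F')) ω g₀ (heq ▸ hg₀)
    have heq2 : (fun j => if j ∈ insert a F' then b j else c j) =
        Function.update g₀ a (b a) := by
      funext j
      by_cases hj : j = a
      · subst hj; simp
      · rw [Function.update_of_ne hj]
        simp [hg₀def, Finset.mem_insert, hj]
    rw [heq2]; exact key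

private lemma endpoint_flip {ι Ω : Type*} [DecidableEq ι] {D : Ω → Assign ι → Bool}
    {Bp : Finset ι} {b : ι → Bool} (hmono : ∀ i ∈ Bp, PosMonotone D i (b i))
    (ω : Ω) {u v : ι} (huv : u ≠ v) (hu : u ∈ Bp)
    (h : D ω (fun j => if j ∈ s(u, v) then !(b j) else b j) = true) :
    D ω (fun j => if j = v then !(b j) else b j) = true := by
  have h2 := unflip hmono ω {u} (by simpa using hu) _ h
  have heq : (fun j => if j ∈ ({u} : Finset ι) then b j
        else (if j ∈ s(u, v) then !(b j) else b j)) =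
      (fun j => if j = v then !(b j) else b j) := by
    funext j
    by_cases h1 : j = u
    · subst h1; simp [huv]
    · by_cases h2 : j = v <;> simp [Sym2.mem_iff, h1, h2, huv.symm]
  rw [heq] at h2; exact h2

private lemma tree_sub_card_lt {ι : Type*} [DecidableEq ι] {Bp : Finset ι}
    {T : Finset (Sym2 ι)} (hT : IsTreeOn Bp T) {S : Finset ι} (hS : S ⊆ Bp)
    (hne : S.Nonempty) {T' : Finset (Sym2 ι)} (hsub : T' ⊆ T)
    (hend : ∀ e ∈ T', ∀ i ∈ e, i ∈ S) :
    T'.card < S.card := by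
  obtain ⟨hTd, hTcard, hTconn⟩ := hT
  obtain ⟨s₀, hs₀⟩ := hne
  set f : ι → ι := fun z => if z ∈ S then s₀ else z with hf
  set V' : Finset ι := (Bp \ S) ∪ {s₀} with hV'
  set T'' : Finset (Sym2 ι) := (T \ T').image (Sym2.map f) with hT''
  have hV'Bp : ∀ x ∈ V', x ∈ Bp := by
    intro x hx
    rcases Finset.mem_union.mp hx with h | h
    · exact (Finset.mem_sdiff.mp h).1
    · rw [Finset.mem_singleton.mp h]; exact hS hs₀
  have hfix : ∀ x ∈ V', f x = x := by
    intro x hx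
    rcases Finset.mem_union.mp hx with h | h
    · simp [hf, (Finset.mem_sdiff.mp h).2]
    · rw [Finset.mem_singleton.mp h]; simp [hf, hs₀]
  have hend'' : ∀ e ∈ T'', ∀ i ∈ e, i ∈ V' := by
    intro e he i hie
    obtain ⟨e₀, he₀, rfl⟩ := Finset.mem_image.mp he
    obtain ⟨j, hj, rfl⟩ := Sym2.mem_map.mp hie
    have hjBp : j ∈ Bp := (hTd e₀ (Finset.mem_sdiff.mp he₀).1).2 j hj
    by_cases hjS : j ∈ S
    · have hfj : f j = s₀ := by simp [hf, hjS]
      rw [hfj]; exact Finset.mem_union_right _ (Finset.mem_singleton_self s₀)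
    · simp only [hf]
      rw [if_neg hjS]
      exact Finset.mem_union_left _ (Finset.mem_sdiff.mpr ⟨hjBp, hjS⟩)
  have hconn'' : ∀ x ∈ V', ∀ y ∈ V',
      Relation.ReflTransGen (fun a b => s(a, b) ∈ T'') x y := by
    intro x hx y hy
    have hmap : ∀ p q, s(p, q) ∈ T → f p = f q ∨ s(f p, f q) ∈ T'' := by
      intro p q hpq
      by_cases hpq' : s(p, q) ∈ T'
      · left
        have hp : p ∈ S := hend _ hpq' p (by simp)
        have hq : q ∈ S := hend _ hpq' q (by simp)
        simp [hf, hp, hq]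
      · right
        exact Finset.mem_image.mpr ⟨s(p, q), Finset.mem_sdiff.mpr ⟨hpq, hpq'⟩,
          Sym2.map_pair_eq f p q⟩
    have := rtg_map_aux f hmap (hTconn x (hV'Bp x hx) y (hV'Bp y hy))
    rwa [hfix x hx, hfix y hy] at this
  have h1 := conn_card_le_aux V'.card V' T'' le_rfl hend'' hconn''
  have hs₀BS : s₀ ∉ Bp \ S := fun h => (Finset.mem_sdiff.mp h).2 hs₀
  have hV'card : V'.card = Bp.card - S.card + 1 := by
    rw [hV', Finset.card_union_of_disjoint (by simpa using hs₀BS),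
      Finset.card_sdiff_of_subset hS, Finset.card_singleton]
  have hT''le : T''.card ≤ T.card - T'.card := by
    calc T''.card ≤ (T \ T').card := Finset.card_image_le
    _ = T.card - T'.card := Finset.card_sdiff_of_subset hsub
  have hT'le : T'.card ≤ T.card := Finset.card_le_card hsub
  have hSle : S.card ≤ Bp.card := Finset.card_le_card hS
  have hSpos : 0 < S.card := Finset.card_pos.mpr ⟨s₀, hs₀⟩
  omega


/-- Theorem 5.3: potential-outcome condition under positive
monotonicity of the literals in `B₊` sufficient for singularity of a
full-domain conjunction. -/
theorem singular_of_monotone_condition {ι Ω : Type*} [Fintype ι] [DecidableEq ι]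
    [Nonempty ι] [Nonempty Ω]
    (D : Ω → Assign ι → Bool) (Bp Bq : Finset ι)
    (hdisj : Disjoint Bp Bq) (hunion : Bp ∪ Bq = Finset.univ)
    (b : ι → Bool)
    (hmono : ∀ i ∈ Bp, PosMonotone D i (b i))
    (T : Finset (Sym2 ι)) (hT : IsTreeOn Bp T)
    (ω : Ω)
    (hineq : 0 <
      ((D ω b).toNat : ℤ)
      - ∑ i ∈ Bp,
          ((D ω (fun j => if j = i then !(b j) else b j)).toNat : ℤ)
      - ∑ s ∈ Bq.powerset.filter (fun s => s.Nonempty),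
          ((D ω (fun j => if j ∈ s then !(b j) else b j)).toNat : ℤ)
      + ∑ E ∈ T,
          ((D ω (fun j => if j ∈ E then !(b j) else b j)).toNat : ℤ)) :
    Singular D (fun i => some (b i)) := by
  classical
  have ha1 : ((D ω b).toNat : ℤ) ≤ 1 := by cases D ω b <;> simp
  have hy0 : (0:ℤ) ≤ ∑ s ∈ Bq.powerset.filter (fun s => s.Nonempty),
      ((D ω (fun j => if j ∈ s then !(b j) else b j)).toNat : ℤ) :=
    Finset.sum_nonneg (fun s _ => by positivity)
  -- Step 1: all single flips in Bp give outcome false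
  have hx : ∀ i ∈ Bp, D ω (fun j => if j = i then !(b j) else b j) = false := by
    by_contra hcon
    push_neg at hcon
    obtain ⟨i₀, hi₀Bp, hi₀⟩ := hcon
    have hi₀' : D ω (fun j => if j = i₀ then !(b j) else b j) = true := by
      revert hi₀; cases D ω (fun j => if j = i₀ then !(b j) else b j) <;> simp
    set S : Finset ι :=
      Bp.filter (fun i => D ω (fun j => if j = i then !(b j) else b j) = true) with hSdef
    set T' : Finset (Sym2 ι) :=
      T.filter (fun e => D ω (fun j => if j ∈ e then !(b j) else b j) = true) with hT'def
    have hxsum : ∑ i ∈ Bp,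
        ((D ω (fun j => if j = i then !(b j) else b j)).toNat : ℤ) = (S.card : ℤ) :=
      sum_toNat_eq_card _ _
    have hzsum : ∑ E ∈ T,
        ((D ω (fun j => if j ∈ E then !(b j) else b j)).toNat : ℤ) = (T'.card : ℤ) :=
      sum_toNat_eq_card _ _
    have hT'end : ∀ e ∈ T', ∀ i ∈ e, i ∈ S := by
      intro e he i hi
      revert he hi
      induction e using Sym2.inductionOn with
      | _ u v =>
        intro he hi
        obtain ⟨he1, heP⟩ := Finset.mem_filter.mp he
        obtain ⟨hd, hendBp⟩ := hT.1 _ he1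
        have huv : u ≠ v := fun h => hd (Sym2.mk_isDiag_iff.mpr h)
        have hu : u ∈ Bp := hendBp u (by simp)
        have hv : v ∈ Bp := hendBp v (by simp)
        rcases Sym2.mem_iff.mp hi with h | h
        · subst h
          have heP' : D ω (fun j => if j ∈ s(v, i) then !(b j) else b j) = true := by
            rwa [Sym2.eq_swap] at heP
          exact Finset.mem_filter.mpr ⟨hu, endpoint_flip hmono ω huv.symm hv heP'⟩
        · subst h
          exact Finset.mem_filter.mpr ⟨hv, endpoint_flip hmono ω huv hu heP⟩
    have hlt : T'.card < S.card :=
      tree_sub_card_lt hT (Finset.filter_subset _ _)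
        ⟨i₀, Finset.mem_filter.mpr ⟨hi₀Bp, hi₀'⟩⟩ (Finset.filter_subset _ _) hT'end
    rw [hxsum, hzsum] at hineq
    have hltZ : (T'.card : ℤ) < (S.card : ℤ) := by exact_mod_cast hlt
    linarith
  -- Step 2: all edge flips give outcome false
  have hz : ∀ E ∈ T, D ω (fun j => if j ∈ E then !(b j) else b j) = false := by
    intro E hE
    revert hE
    induction E using Sym2.inductionOn with
    | _ u v =>
      intro hE
      cases hDE : D ω (fun j => if j ∈ s(u, v) then !(b j) else b j)
      · rfl
      · exfalso
        obtain ⟨hd, hendBp⟩ := hT.1 _ hE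
        have huv : u ≠ v := fun h => hd (Sym2.mk_isDiag_iff.mpr h)
        have hu : u ∈ Bp := hendBp u (by simp)
        have hv : v ∈ Bp := hendBp v (by simp)
        have hres := endpoint_flip hmono ω huv hu hDE
        rw [hx v hv] at hres
        exact Bool.noConfusion hres
  have hxzero : ∑ i ∈ Bp,
      ((D ω (fun j => if j = i then !(b j) else b j)).toNat : ℤ) = 0 :=
    Finset.sum_eq_zero (fun i hi => by rw [hx i hi]; rfl)
  have hzzero : ∑ E ∈ T,
      ((D ω (fun j => if j ∈ E then !(b j) else b j)).toNat : ℤ) = 0 :=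
    Finset.sum_eq_zero (fun E hE => by rw [hz E hE]; rfl)
  rw [hxzero, hzzero] at hineq
  -- Step 3: all subset flips in Bq give outcome false
  have hylt : ∑ s ∈ Bq.powerset.filter (fun s => s.Nonempty),
      ((D ω (fun j => if j ∈ s then !(b j) else b j)).toNat : ℤ) < 1 := by linarith
  have hsum0 : ∑ s ∈ Bq.powerset.filter (fun s => s.Nonempty),
      ((D ω (fun j => if j ∈ s then !(b j) else b j)).toNat : ℤ) = 0 :=
    le_antisymm (by linarith [Int.lt_iff_add_one_le.mp hylt]) hy0
  have hyterms := (Finset.sum_eq_zero_iff_of_nonneg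
    (fun s _ => by positivity : ∀ s ∈ Bq.powerset.filter (fun s => s.Nonempty),
      (0:ℤ) ≤ ((D ω (fun j => if j ∈ s then !(b j) else b j)).toNat : ℤ))).mp hsum0
  have hy : ∀ s : Finset ι, s ⊆ Bq → s.Nonempty →
      D ω (fun j => if j ∈ s then !(b j) else b j) = false := by
    intro s hs hne
    have h0 := hyterms s (Finset.mem_filter.mpr ⟨Finset.mem_powerset.mpr hs, hne⟩)
    revert h0
    cases D ω (fun j => if j ∈ s then !(b j) else b j) <;> simp
  -- Step 4: the outcome at the target assignment is true
  rw [hsum0] at hineq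
  have ha : D ω b = true := by
    cases hb : D ω b
    · rw [hb] at hineq; norm_num at hineq
    · rfl
  -- Step 5: any sufficient cause for ω is B itself
  have hkey : ∀ B' : Conj ι, SuffCauseFor D B' ω → B' = (fun i => some (b i)) := by
    intro B' hsuff
    set c : Assign ι := fun j => (B' j).getD (b j) with hcdef
    have hc : D ω c = true := hsuff c (by intro i v hiv; simp [hcdef, hiv])
    set F : Finset ι := Finset.univ.filter (fun j => ¬ c j = b j) with hFdef
    have hFmem : ∀ j, j ∈ F ↔ ¬ c j = b j := fun j => by simp [hFdef]
    by_cases hFBq : (F \ Bp).Nonempty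
    · exfalso
      have hsBq : F \ Bp ⊆ Bq := by
        intro j hj
        obtain ⟨hjF, hjBp⟩ := Finset.mem_sdiff.mp hj
        have hU : j ∈ Bp ∪ Bq := by rw [hunion]; exact Finset.mem_univ j
        rcases Finset.mem_union.mp hU with h | h
        · exact absurd h hjBp
        · exact h
      have hres := unflip hmono ω (F ∩ Bp) Finset.inter_subset_right c hc
      have heq : (fun j => if j ∈ F ∩ Bp then b j else c j) =
          (fun j => if j ∈ F \ Bp then !(b j) else b j) := by
        funext j
        by_cases hjF : j ∈ F
        · by_cases hjBp : j ∈ Bp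
          · rw [if_pos (Finset.mem_inter.mpr ⟨hjF, hjBp⟩),
              if_neg (fun h => (Finset.mem_sdiff.mp h).2 hjBp)]
          · rw [if_neg (fun h => hjBp (Finset.mem_inter.mp h).2),
              if_pos (Finset.mem_sdiff.mpr ⟨hjF, hjBp⟩)]
            exact bool_ne_iff' ((hFmem j).mp hjF)
        · rw [if_neg (fun h => hjF (Finset.mem_inter.mp h).1),
            if_neg (fun h => hjF (Finset.mem_sdiff.mp h).1)]
          by_contra h
          exact hjF ((hFmem j).mpr h)
      rw [heq, hy (F \ Bp) hsBq hFBq] at hres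
      exact Bool.noConfusion hres
    · by_cases hFne : F.Nonempty
      · exfalso
        obtain ⟨i₀, hi₀⟩ := hFne
        have hFBp : F ⊆ Bp := by
          intro j hj
          by_contra hjBp
          exact hFBq ⟨j, Finset.mem_sdiff.mpr ⟨hj, hjBp⟩⟩
        have hres := unflip hmono ω (F.erase i₀)
          ((Finset.erase_subset _ _).trans hFBp) c hc
        have heq : (fun j => if j ∈ F.erase i₀ then b j else c j) =
            (fun j => if j = i₀ then !(b j) else b j) := by
          funext j
          by_cases hj0 : j = i₀
          · rw [if_neg (by rw [hj0]; exact Finset.notMem_erase i₀ F), if_pos hj0]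
            exact bool_ne_iff' ((hFmem j).mp (by rw [hj0]; exact hi₀))
          · by_cases hjF : j ∈ F
            · rw [if_pos (Finset.mem_erase.mpr ⟨hj0, hjF⟩), if_neg hj0]
            · rw [if_neg (fun h => hjF (Finset.mem_of_mem_erase h)), if_neg hj0]
              by_contra h
              exact hjF ((hFmem j).mpr h)
        rw [heq, hx i₀ (hFBp hi₀)] at hres
        exact Bool.noConfusion hres
      · have hcb : ∀ j, c j = b j := by
          intro j
          by_contra h
          exact hFne ⟨j, (hFmem j).mpr h⟩
        have hagree : ∀ i v, B' i = some v → v = b i := by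
          intro i v hiv
          have hci : c i = v := by simp [hcdef, hiv]
          calc v = c i := hci.symm
            _ = b i := hcb i
        by_cases hnone : ∃ k, B' k = none
        · exfalso
          obtain ⟨k, hk⟩ := hnone
          have hsat' : Satisfies (fun j => if j = k then !(b j) else b j) B' := by
            intro i v hiv
            by_cases hik : i = k
            · rw [hik, hk] at hiv; cases hiv
            · show (if i = k then !(b i) else b i) = v
              rw [if_neg hik]; exact (hagree i v hiv).symm
          have hD := hsuff _ hsat'
          by_cases hkBp : k ∈ Bp
          · rw [hx k hkBp] at hD; exact Bool.noConfusion hD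
          · have hU : k ∈ Bp ∪ Bq := by rw [hunion]; exact Finset.mem_univ k
            have hkBq : k ∈ Bq := by
              rcases Finset.mem_union.mp hU with h | h
              · exact absurd h hkBp
              · exact h
            have heqk : (fun j => if j = k then !(b j) else b j) =
                (fun j => if j ∈ ({k} : Finset ι) then !(b j) else b j) := by
              funext j; simp [Finset.mem_singleton]
            rw [heqk, hy {k} (Finset.singleton_subset_iff.mpr hkBq) ⟨k, Finset.mem_singleton_self k⟩] at hD
            exact Bool.noConfusion hD
        · push_neg at hnone
          funext i
          cases hBi : B' i with
          | none => exact absurd hBi (hnone i)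
          | some v => rw [hagree i v hBi]
  refine ⟨ω, ⟨⟨?_, ?_⟩, ?_⟩⟩
  · intro c hcsat
    have hceq : c = b := funext (fun i => hcsat i (b i) rfl)
    rw [hceq]; exact ha
  · intro B' _ hne hsuff
    exact hne (hkey B' hsuff)
  · intro B' hne hmin
    exact hne (hkey B' hmin.1)
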